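/- For β > 0, the function Ψ_β(z) = F(-1/2, 1/β; 1/β + 1; -z) (Gaussian hypergeometric function) evaluated at z = -1 gives Ψ_β(-1) = (1/Γ(-1/2)) Σ_{j=0}^∞ Γ(-1/2 + j)/(j!(1 + jβ)), and the function τ(β) := (1/Γ(-1/2)) Σ_{j=0}^∞ Γ(-1/2+j)/(j!(1+jβ)) - 1/3 is strictly increasing on (0, ∞). -/

import Mathlib

open Real

/-- Pochhammer symbol `(x)_j = x(x+1)⋯(x+j-1)` for real `x`. -/
def poch (x : ℝ) (j : ℕ) : ℝ := ∏ i ∈ Finset.range j, (x + i)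

/-- Gaussian hypergeometric series as a sum (real arguments). -/
noncomputable def hypF (a b c x : ℝ) : ℝ :=
  ∑' j : ℕ, poch a j * poch b j / (j.factorial * poch c j) * x ^ j

lemma poch_zero (x : ℝ) : poch x 0 = 1 := by simp [poch]

lemma poch_succ (x : ℝ) (j : ℕ) : poch x (j+1) = poch x j * (x + j) := by
  simp [poch, Finset.prod_range_succ]

lemma poch_pos {x : ℝ} (hx : 0 < x) (j : ℕ) : 0 < poch x j := by
  apply Finset.prod_pos
  intro i _
  positivity

lemma poch_mul (x : ℝ) (j : ℕ) : x * poch (x+1) j = poch x j * (x + j) := by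
  induction j with
  | zero => simp [poch_zero]
  | succ n ih =>
      rw [poch_succ, poch_succ]
      push_cast
      linear_combination (x + n + 1) * ih

lemma neg_half_add_ne (j : ℕ) : (-1/2 : ℝ) + j ≠ 0 := by
  rcases j with _ | j
  · norm_num
  · have hj : (0:ℝ) ≤ (j:ℝ) := Nat.cast_nonneg j
    push_cast
    intro h
    linarith

lemma gamma_eq (j : ℕ) : Real.Gamma (-1/2 + j) = poch (-1/2) j * Real.Gamma (-1/2) := by
  induction j with
  | zero => simp [poch_zero]
  | succ n ih =>
      have h : (-1/2 : ℝ) + (n+1 : ℕ) = ((-1/2 : ℝ) + n) + 1 := by push_cast; ring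
      rw [h, Real.Gamma_add_one (neg_half_add_ne n), ih, poch_succ]
      ring

lemma poch_neg_half_neg {j : ℕ} (hj : 1 ≤ j) : poch (-1/2) j < 0 := by
  induction j, hj using Nat.le_induction with
  | base => simp [poch, Finset.prod_range_one]; norm_num
  | succ n hn ih =>
      rw [poch_succ]
      have h1 : (0:ℝ) < -1/2 + n := by
        have : (1:ℝ) ≤ (n:ℝ) := by exact_mod_cast hn
        linarith
      nlinarith

lemma partial_sum (a : ℝ) (n : ℕ) :
    ∑ j ∈ Finset.range (n+1), poch a j / j.factorial = poch (a+1) n / n.factorial := by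
  induction n with
  | zero => simp [poch_zero]
  | succ n ih =>
      rw [Finset.sum_range_succ, ih, poch_succ, poch_succ]
      have h1 : (n.factorial : ℝ) ≠ 0 := by exact_mod_cast n.factorial_ne_zero
      have h2 : ((n+1).factorial : ℝ) = (n+1) * n.factorial := by
        push_cast [Nat.factorial_succ]; ring
      have h3 : a * poch (a+1) n = poch a n * (a + n) := poch_mul a n
      rw [h2]
      field_simp
      linear_combination (-1:ℝ) * h3

noncomputable def A (j : ℕ) : ℝ := poch (-1/2) j / j.factorial

lemma A_zero : A 0 = 1 := by simp [A, poch_zero]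

lemma A_nonpos {j : ℕ} (hj : 1 ≤ j) : A j ≤ 0 := by
  have := poch_neg_half_neg hj
  have h : (0:ℝ) < j.factorial := by exact_mod_cast j.factorial_pos
  exact le_of_lt (div_neg_of_neg_of_pos this h)

lemma summable_A : Summable A := by
  rw [← summable_nat_add_iff 1]
  rw [← summable_neg_iff]
  apply summable_of_sum_range_le (c := 1)
  · intro n
    simp only [neg_nonneg]
    exact A_nonpos (Nat.le_add_left 1 n)
  · intro n
    have key : ∑ j ∈ Finset.range (n+1), A j = poch (-1/2 + 1) n / n.factorial := by
      exact partial_sum (-1/2) n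
    have h0 : ∑ j ∈ Finset.range (n+1), A j = A 0 + ∑ i ∈ Finset.range n, A (i+1) := by
      rw [Finset.sum_range_succ']
      ring
    have hp : 0 ≤ poch (-1/2 + 1) n / n.factorial := by
      have := poch_pos (show (0:ℝ) < -1/2 + 1 by norm_num) n
      have h : (0:ℝ) < n.factorial := by exact_mod_cast n.factorial_pos
      positivity
    have : ∑ i ∈ Finset.range n, A (i+1) = poch (-1/2 + 1) n / n.factorial - 1 := by
      rw [← key, h0, A_zero]; ring
    rw [Finset.sum_neg_distrib, this]
    linarith

lemma summable_term {β : ℝ} (hβ : 0 < β) : Summable (fun j : ℕ => A j / (1 + j * β)) := by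
  apply Summable.of_abs
  apply Summable.of_nonneg_of_le (fun j => abs_nonneg _) (fun j => ?_) summable_A.abs
  rw [abs_div]
  have h1 : (1:ℝ) ≤ 1 + j * β := by
    have : (0:ℝ) ≤ (j:ℝ) * β := by positivity
    linarith
  rw [abs_of_pos (by linarith : (0:ℝ) < 1 + j * β)]
  calc |A j| / (1 + j * β) ≤ |A j| / 1 := by
        apply div_le_div_of_nonneg_left (abs_nonneg _) one_pos h1
    _ = |A j| := by ring

lemma term_rewrite {β : ℝ} (hβ : 0 < β) (j : ℕ) :
    (1 / Real.Gamma (-1/2)) * (Real.Gamma (-1/2 + j) / (j.factorial * (1 + j * β)))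
      = A j / (1 + j * β) := by
  have hΓ : Real.Gamma (-1/2) ≠ 0 := by
    intro h
    have h1 := Real.Gamma_add_one (show (-1/2:ℝ) ≠ 0 by norm_num)
    rw [h, mul_zero] at h1
    rw [show (-1/2:ℝ)+1 = 1/2 by norm_num, Real.Gamma_one_half_eq] at h1
    exact (Real.sqrt_pos.mpr Real.pi_pos).ne' h1
  have hfac : (j.factorial : ℝ) ≠ 0 := by exact_mod_cast j.factorial_ne_zero
  have hd : (1 : ℝ) + j * β ≠ 0 := by
    have : (0:ℝ) ≤ (j:ℝ) * β := by positivity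
    linarith
  rw [gamma_eq j]
  simp only [A]
  field_simp
  exact mul_div_cancel_left₀ _ (by rw [show -(1/2:ℝ) = -1/2 by ring]; exact hΓ)

lemma tsum_rewrite {β : ℝ} (hβ : 0 < β) :
    (1 / Real.Gamma (-1/2)) *
        (∑' j : ℕ, Real.Gamma (-1/2 + j) / (j.factorial * (1 + j * β)))
      = ∑' j : ℕ, A j / (1 + j * β) := by
  rw [← tsum_mul_left]
  exact tsum_congr (fun j => term_rewrite hβ j)

theorem Psi_at_minus_one_and_tau_mono :
    (∀ β : ℝ, 0 < β →
      hypF (-1/2) (1/β) (1/β + 1) 1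
        = (1 / Real.Gamma (-1/2)) *
            ∑' j : ℕ, Real.Gamma (-1/2 + j) / (j.factorial * (1 + j * β))) ∧
    StrictMonoOn
      (fun β : ℝ => (1 / Real.Gamma (-1/2)) *
          (∑' j : ℕ, Real.Gamma (-1/2 + j) / (j.factorial * (1 + j * β))) - 1/3)
      (Set.Ioi (0:ℝ)) := by
  constructor
  · intro β hβ
    rw [tsum_rewrite hβ]
    unfold hypF
    apply tsum_congr
    intro j
    have hb : (0:ℝ) < 1/β := by positivity
    have hpc : 0 < poch (1/β + 1) j := poch_pos (by linarith) j
    have hfac : (0:ℝ) < j.factorial := by exact_mod_cast j.factorial_pos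
    have hd : (0:ℝ) < 1 + j * β := by positivity
    have key : (1/β) * poch (1/β + 1) j = poch (1/β) j * (1/β + j) := poch_mul (1/β) j
    have hratio : poch (1/β) j * (1 + j * β) = poch (1/β + 1) j := by
      have hβ' : β ≠ 0 := ne_of_gt hβ
      have : (1/β + (j:ℝ)) * β = 1 + j * β := by field_simp
      calc poch (1/β) j * (1 + j * β) = poch (1/β) j * ((1/β + j) * β) := by rw [this]
        _ = ((1/β) * poch (1/β + 1) j) * β := by rw [key]; ring
        _ = poch (1/β + 1) j := by field_simp
    have hp2 : 0 < poch (1/β) j := poch_pos hb j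
    rw [one_pow, mul_one]
    simp only [A]
    rw [← hratio]
    field_simp
  · intro β₁ hβ₁ β₂ hβ₂ hlt
    simp only [Set.mem_Ioi] at hβ₁ hβ₂
    simp only
    rw [tsum_rewrite hβ₁, tsum_rewrite hβ₂]
    have key : (∑' j : ℕ, A j / (1 + j * β₁)) < ∑' j : ℕ, A j / (1 + j * β₂) := by
      apply Summable.tsum_lt_tsum (i := 1) _ _ (summable_term hβ₁) (summable_term hβ₂)
      · intro j
        rcases Nat.eq_zero_or_pos j with hj | hj
        · subst hj; simp
        · have hA : A j ≤ 0 := A_nonpos hj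
          have h1 : (0:ℝ) < 1 + j * β₁ := by positivity
          have h2 : (0:ℝ) < 1 + j * β₂ := by positivity
          have hle : 1 + (j:ℝ) * β₁ ≤ 1 + j * β₂ := by
            have : (1:ℝ) ≤ (j:ℝ) := by exact_mod_cast hj
            nlinarith
          rw [div_le_div_iff₀ h1 h2]
          nlinarith
      · have hA : A 1 < 0 := by
          simp [A, poch, Finset.prod_range_one]
          norm_num
        have h1 : (0:ℝ) < 1 + (1:ℕ) * β₁ := by positivity
        have h2 : (0:ℝ) < 1 + (1:ℕ) * β₂ := by positivity
        rw [div_lt_div_iff₀ h1 h2]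
        push_cast
        nlinarith
    linarith
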